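/- Let P be a countable cancellative monoid and let T : P → B(H) be the family of truncated shift operators on H = ℓ²(Δ), i.e. a family of bounded linear operators satisfying T_p δ_{(a,x)} = δ_{(a,px)} whenever (a,px) ∈ Δ and T_p δ_{(a,x)} = 0 otherwise, for all p ∈ P and (a,x) ∈ Δ. Then each T_p is a partial isometry; that is, T_p ∘ (T_p)* ∘ T_p = T_p for every p ∈ P, where (T_p)* denotes the Hilbert-space adjoint of T_p. -/

import Mathlib

/-- `Δ = {(bx, x) : b, x ∈ P}`. -/
def Delta (P : Type*) [Monoid P] : Set (P × P) := {γ | ∃ b x : P, γ = (b * x, x)}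

/-- The standard orthonormal basis vector `δ_γ` of `ℓ²(Δ)`. -/
noncomputable def deltaBasis (P : Type*) [Monoid P] (γ : Delta P) :
    lp (fun _ : Delta P => ℂ) 2 :=
  letI := Classical.decEq (Delta P)
  lp.single 2 γ 1

/-- `T : P → B(ℓ²(Δ))` is the family of truncated shift operators:
`T_p δ_{(a,x)} = δ_{(a,px)}` whenever `(a,px) ∈ Δ`, and `T_p δ_{(a,x)} = 0` otherwise. -/
def IsTruncShift (P : Type*) [Monoid P]
    (T : P → (lp (fun _ : Delta P => ℂ) 2 →L[ℂ] lp (fun _ : Delta P => ℂ) 2)) : Prop :=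
  ∀ (p : P) (γ : Delta P),
    (∀ h : ((γ : P × P).1, p * (γ : P × P).2) ∈ Delta P,
      T p (deltaBasis P γ) = deltaBasis P ⟨((γ : P × P).1, p * (γ : P × P).2), h⟩) ∧
    (((γ : P × P).1, p * (γ : P × P).2) ∉ Delta P → T p (deltaBasis P γ) = 0)


lemma deltaBasis_inner {P : Type*} [Monoid P] (γ : Delta P)
    (f : lp (fun _ : Delta P => ℂ) 2) :
    inner (𝕜 := ℂ) (deltaBasis P γ) f = f γ := by
  simp [deltaBasis, lp.inner_single_left]

lemma deltaBasis_apply_self {P : Type*} [Monoid P] (γ : Delta P) :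
    (deltaBasis P γ : ∀ _ : Delta P, ℂ) γ = 1 := by
  simp [deltaBasis, lp.single_apply_self]

lemma deltaBasis_apply_ne {P : Type*} [Monoid P] {γ β : Delta P} (h : β ≠ γ) :
    (deltaBasis P γ : ∀ _ : Delta P, ℂ) β = 0 := by
  letI := Classical.decEq (Delta P)
  simp [deltaBasis, lp.single_apply_ne _ _ _ h, Pi.single_apply, h]

/-- Two continuous linear maps on `ℓ²(Δ)` agreeing on all `deltaBasis` vectors are equal. -/
lemma clm_ext_deltaBasis {P : Type*} [Monoid P]
    {A B : lp (fun _ : Delta P => ℂ) 2 →L[ℂ] lp (fun _ : Delta P => ℂ) 2}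
    (h : ∀ γ : Delta P, A (deltaBasis P γ) = B (deltaBasis P γ)) : A = B := by
  letI := Classical.decEq (Delta P)
  refine ContinuousLinearMap.ext fun f => ?_
  have hf := lp.hasSum_single (E := fun _ : Delta P => ℂ) ENNReal.ofNat_ne_top f
  have hsingle : ∀ γ : Delta P, lp.single (E := fun _ : Delta P => ℂ) 2 γ (f γ)
      = f γ • deltaBasis P γ := by
    intro γ
    rw [deltaBasis, ← lp.single_smul]
    norm_num
  have hA : HasSum (fun γ : Delta P => f γ • A (deltaBasis P γ)) (A f) := by
    have := A.hasSum hf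
    simpa [hsingle] using this
  have hB : HasSum (fun γ : Delta P => f γ • B (deltaBasis P γ)) (B f) := by
    have := B.hasSum hf
    simpa [hsingle] using this
  simp only [h] at hA
  exact hA.unique hB

/-- For a countable cancellative monoid `P`, each truncated shift operator `T_p` is a
partial isometry: `T_p ∘ (T_p)* ∘ T_p = T_p`. -/
theorem truncShift_partialIsometry {P : Type*} [CancelMonoid P] [Countable P]
    (T : P → (lp (fun _ : Delta P => ℂ) 2 →L[ℂ] lp (fun _ : Delta P => ℂ) 2))
    (hT : IsTruncShift P T) :
    ∀ p : P, (T p).comp ((ContinuousLinearMap.adjoint (T p)).comp (T p)) = T p := by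
  intro p
  apply clm_ext_deltaBasis
  intro γ
  simp only [ContinuousLinearMap.comp_apply]
  by_cases h : ((γ : P × P).1, p * (γ : P × P).2) ∈ Delta P
  · rw [(hT p γ).1 h]
    have hadj : ContinuousLinearMap.adjoint (T p)
        (deltaBasis P ⟨((γ : P × P).1, p * (γ : P × P).2), h⟩) = deltaBasis P γ := by
      apply lp.ext
      funext β
      have hco : ∀ x : lp (fun _ : Delta P => ℂ) 2, (x : ∀ _ : Delta P, ℂ) β
          = inner (𝕜 := ℂ) (deltaBasis P β) x := fun x => (deltaBasis_inner β x).symm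
      rw [hco, hco, ContinuousLinearMap.adjoint_inner_right]
      by_cases hβ : ((β : P × P).1, p * (β : P × P).2) ∈ Delta P
      · rw [(hT p β).1 hβ, deltaBasis_inner, deltaBasis_inner]
        by_cases hβγ : β = γ
        · subst hβγ
          rw [deltaBasis_apply_self, deltaBasis_apply_self]
        · rw [deltaBasis_apply_ne hβγ, deltaBasis_apply_ne]
          intro hc
          apply hβγ
          have := Subtype.ext_iff.mp hc
          simp only [Prod.ext_iff] at this
          exact Subtype.ext (Prod.ext this.1 (mul_left_cancel this.2))
      · rw [(hT p β).2 hβ]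
        have hβγ : β ≠ γ := fun hc => hβ (hc ▸ h)
        rw [deltaBasis_inner, deltaBasis_apply_ne hβγ]
        simp
    rw [hadj, (hT p γ).1 h]
  · rw [(hT p γ).2 h]
    simp [(hT p γ).2 h]
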